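/- Let H be a finite simple graph with vertex set partitioned into a red set T and a nonempty blue set B, and let k ≥ 1. Construct the graph G on vertex set T ⊎ (B × {1,…,k}) in which (b,i) is adjacent to t ∈ T if and only if b is adjacent to t in H (and there are no other edges), with blocks C_0 := T and C_i := B × {i} for 1 ≤ i ≤ k. Then H has a set of at most k blue vertices such that every red vertex is adjacent to one of them if and only if G (with blocks C_0,…,C_k) has a colourful dominating set. -/

import Mathlib

/-- A colourful dominating set for a graph with blocks `C 0, C 1, …, C k`:
it contains exactly one vertex from each block `C i`, `i ≥ 1` (and none from
`C 0`), and every vertex of `C 0` belongs to it or is adjacent to one of its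
vertices. -/
def ColourfulDominating {V : Type*} {k : ℕ} (G : SimpleGraph V)
    (C : Fin (k + 1) → Set V) (D : Set V) : Prop :=
  (∀ i, i ≠ 0 → (D ∩ C i).ncard = 1) ∧ D ∩ C 0 = ∅ ∧
    ∀ v ∈ C 0, v ∈ D ∨ ∃ u ∈ D, G.Adj u v

/-- Red-Blue Dominating Set reduces to Colourful Dominating Set: let `H` be a
finite graph whose vertices are partitioned into a red set `T` and a nonempty
blue set `B` and let `k ≥ 1`.  Build the graph `G` on `T ⊕ (B × Fin k)` (the
blue set copied `k` times) in which `(b, i)` is adjacent to `t ∈ T` iff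
`b` is adjacent to `t` in `H`, with blocks `C 0 = T` and `C i = B × {i}` for
`1 ≤ i ≤ k`.  Then `H` has at most `k` blue vertices whose neighbourhoods
cover all red vertices iff `G` has a colourful dominating set. -/
theorem redBlue_iff_colourfulDominating {W : Type*} [Fintype W]
    (H : SimpleGraph W) (T B : Set W)
    (hdisj : Disjoint T B) (hcover : T ∪ B = Set.univ) (hB : B.Nonempty)
    {k : ℕ} (hk : 1 ≤ k) :
    let Vt := ↥T ⊕ (↥B × Fin k)
    let G : SimpleGraph Vt := SimpleGraph.fromRel (fun a b =>
      match a, b with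
      | Sum.inr p, Sum.inl t => H.Adj p.1.1 t.1
      | _, _ => False)
    let C : Fin (k + 1) → Set Vt := fun i =>
      if h : i = 0 then Set.range Sum.inl
      else {v | ∃ b : ↥B, v = Sum.inr (b, i.pred h)}
    (∃ S : Set W, S.ncard ≤ k ∧ S ⊆ B ∧ ∀ t ∈ T, ∃ b ∈ S, H.Adj b t) ↔
      ∃ D : Set Vt, ColourfulDominating G C D := by
  intro Vt G C
  constructor
  · rintro ⟨S, hSk, hSB, hdom⟩
    obtain ⟨f, hf⟩ : ∃ f : Fin k → ↥B, ∀ t ∈ T, ∃ i, H.Adj (f i).1 t := by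
      rcases S.eq_empty_or_nonempty with hS | hS
      · refine ⟨fun _ => ⟨hB.choose, hB.choose_spec⟩, fun t ht => ?_⟩
        obtain ⟨b, hb, -⟩ := hdom t ht
        simp [hS] at hb
      · haveI := hS.to_subtype
        haveI := S.toFinite.fintype
        have hcard : Fintype.card S ≤ Fintype.card (Fin k) := by
          rw [← Nat.card_eq_fintype_card, Nat.card_coe_set_eq, Fintype.card_fin]
          exact hSk
        obtain ⟨ι⟩ := Function.Embedding.nonempty_of_card_le hcard
        set σ : Fin k → S := Function.invFun (⇑ι) with hσdef
        have hσ : Function.Surjective σ := Function.invFun_surjective ι.injective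
        refine ⟨fun i => ⟨((σ i : S) : W), hSB (σ i).2⟩, fun t ht => ?_⟩
        obtain ⟨b, hb, hadj⟩ := hdom t ht
        obtain ⟨i, hi⟩ := hσ ⟨b, hb⟩
        exact ⟨i, by simp only []; rw [hi]; exact hadj⟩
    refine ⟨Set.range (fun i : Fin k => (Sum.inr (f i, i) : Vt)), ?_, ?_, ?_⟩
    · intro i hi
      have hset : (Set.range fun i : Fin k => (Sum.inr (f i, i) : Vt)) ∩ C i
          = {Sum.inr (f (i.pred hi), i.pred hi)} := by
        ext v
        simp only [C, dif_neg hi, Set.mem_inter_iff, Set.mem_range, Set.mem_setOf_eq,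
          Set.mem_singleton_iff]
        constructor
        · rintro ⟨⟨j, rfl⟩, b, hb⟩
          obtain ⟨h1, h2⟩ := Prod.mk.injEq .. ▸ Sum.inr.inj hb
          subst h2
          rfl
        · rintro rfl
          exact ⟨⟨_, rfl⟩, f _, rfl⟩
      rw [hset, Set.ncard_singleton]
    · ext v
      simp only [C, dif_pos rfl, Set.mem_inter_iff, Set.mem_range, Set.mem_empty_iff_false,
        iff_false, not_and]
      rintro ⟨j, rfl⟩ ⟨t, ht⟩
      exact Sum.inl_ne_inr ht
    · intro v hv
      simp only [C, dif_pos rfl, Set.mem_range] at hv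
      obtain ⟨t, rfl⟩ := hv
      obtain ⟨i, hadj⟩ := hf t.1 t.2
      refine Or.inr ⟨Sum.inr (f i, i), ⟨i, rfl⟩, ?_⟩
      rw [show G = SimpleGraph.fromRel _ from rfl, SimpleGraph.fromRel_adj]
      exact ⟨by simp, Or.inl hadj⟩
  · rintro ⟨D, h1, h2, h3⟩
    set E : Set (↥B × Fin k) := {p | Sum.inr p ∈ D} with hE
    have hmemC : ∀ p : ↥B × Fin k, (Sum.inr p : Vt) ∈ C p.2.succ := by
      intro p
      simp only [C, dif_neg (Fin.succ_ne_zero p.2), Set.mem_setOf_eq]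
      exact ⟨p.1, by rw [Fin.pred_succ]⟩
    have hEinj : Set.InjOn (fun p : ↥B × Fin k => p.2) E := by
      intro p hp q hq hpq
      obtain ⟨a, ha⟩ := Set.ncard_eq_one.mp (h1 p.2.succ (Fin.succ_ne_zero _))
      have hpa : (Sum.inr p : Vt) ∈ D ∩ C p.2.succ := ⟨hp, hmemC p⟩
      have hqa : (Sum.inr q : Vt) ∈ D ∩ C p.2.succ := by
        refine ⟨hq, ?_⟩
        have := hmemC q
        rwa [show q.2 = p.2 from hpq.symm] at this
      rw [ha, Set.mem_singleton_iff] at hpa hqa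
      exact Sum.inr.inj (hpa.trans hqa.symm)
    have hEcard : E.ncard ≤ k := by
      calc E.ncard = ((fun p : ↥B × Fin k => p.2) '' E).ncard := (Set.ncard_image_of_injOn hEinj).symm
        _ ≤ (Set.univ : Set (Fin k)).ncard :=
            Set.ncard_le_ncard (Set.subset_univ _) Set.finite_univ
        _ = k := by rw [Set.ncard_univ, Nat.card_eq_fintype_card, Fintype.card_fin]
    refine ⟨(fun p : ↥B × Fin k => p.1.1) '' E, ?_, ?_, ?_⟩
    · exact le_trans (Set.ncard_image_le E.toFinite) hEcard
    · rintro w ⟨p, hp, rfl⟩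
      exact p.1.2
    · intro t ht
      have hv : (Sum.inl ⟨t, ht⟩ : Vt) ∈ C 0 := by
        simp only [C, dif_pos rfl]
        exact ⟨⟨t, ht⟩, rfl⟩
      rcases h3 _ hv with hmem | ⟨u, hu, hadj⟩
      · have : (Sum.inl ⟨t, ht⟩ : Vt) ∈ D ∩ C 0 := ⟨hmem, hv⟩
        rw [h2] at this
        exact absurd this (Set.notMem_empty _)
      · rw [show G = SimpleGraph.fromRel _ from rfl, SimpleGraph.fromRel_adj] at hadj
        obtain ⟨-, hadj | hadj⟩ := hadj
        · rcases u with t' | p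
          · exact absurd hadj (by simp)
          · exact ⟨p.1.1, ⟨p, hu, rfl⟩, hadj⟩
        · exact absurd hadj (by simp)
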